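/- (Carlitz inversion) For sequences (a(n)), (b(n)): if b(n) = Σ_{k=0}^{⌊n/2⌋} [n choose k]_q s^k a(n-2k) for all n, then a(n) = Σ_{k=0}^{⌊n/2⌋} q^{k(k-1)/2} ([n]_q/[n-k]_q) [n-k choose k]_q (-s)^k b(n-2k) for all n, and conversely. -/

import Mathlib

open Finset

/-- The q-analogue `[n]_q = (1-q^n)/(1-q)`. -/
noncomputable def qNum {F : Type*} [Field F] (q : F) (n : ℕ) : F := (1 - q ^ n) / (1 - q)

/-- The q-factorial `[n]_q! = [1]_q [2]_q ⋯ [n]_q`. -/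
noncomputable def qFact {F : Type*} [Field F] (q : F) (n : ℕ) : F :=
  ∏ j ∈ Finset.Icc 1 n, qNum q j

/-- The q-binomial (Gaussian) coefficient `[n choose k]_q = [n]_q!/([k]_q! [n-k]_q!)`,
zero when `k > n`. -/
noncomputable def qBinom {F : Type*} [Field F] (q : F) (n k : ℕ) : F :=
  if k ≤ n then qFact q n / (qFact q k * qFact q (n - k)) else 0


section
variable {F : Type*} [Field F] {q : F}

lemma qNum_ne (hq : ∀ j : ℕ, 1 ≤ j → q ^ j ≠ 1) {j : ℕ} (hj : 1 ≤ j) : qNum q j ≠ 0 := by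
  have h1 : (1:F) - q ≠ 0 := sub_ne_zero.mpr (Ne.symm (by simpa using hq 1 le_rfl))
  have h2 : (1:F) - q ^ j ≠ 0 := sub_ne_zero.mpr (Ne.symm (hq j hj))
  exact div_ne_zero h2 h1

lemma qFact_ne (hq : ∀ j : ℕ, 1 ≤ j → q ^ j ≠ 1) (n : ℕ) : qFact q n ≠ 0 := by
  refine Finset.prod_ne_zero_iff.mpr ?_
  intro j hj; exact qNum_ne hq (mem_Icc.mp hj).1

lemma qFact_zero : qFact q 0 = (1:F) := by simp [qFact]

lemma qFact_succ (n : ℕ) : qFact q (n+1) = qFact q n * qNum q (n+1) := by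
  rw [qFact, qFact, ← Finset.prod_Icc_succ_top (by omega : 1 ≤ n+1)]

lemma qBinom_zero (hq : ∀ j : ℕ, 1 ≤ j → q ^ j ≠ 1) (n : ℕ) : qBinom q n 0 = 1 := by
  rw [qBinom, if_pos (Nat.zero_le n)]
  simp only [qFact_zero, Nat.sub_zero, one_mul]
  exact div_self (qFact_ne hq n)

lemma qBinom_self (hq : ∀ j : ℕ, 1 ≤ j → q ^ j ≠ 1) (n : ℕ) : qBinom q n n = 1 := by
  rw [qBinom, if_pos le_rfl]
  simp only [qFact_zero, Nat.sub_self, mul_one]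
  exact div_self (qFact_ne hq n)

lemma qBinom_of_gt {n k : ℕ} (h : n < k) : qBinom q n k = 0 := by
  rw [qBinom, if_neg (by omega)]

lemma qBinom_add (a b : ℕ) : qBinom q (a+b) a = qFact q (a+b) / (qFact q a * qFact q b) := by
  rw [qBinom, if_pos (by omega), Nat.add_sub_cancel_left]

lemma qNum_add (hq : ∀ j : ℕ, 1 ≤ j → q ^ j ≠ 1) (i j : ℕ) :
    qNum q (i+j) = qNum q i + q ^ i * qNum q j := by
  have h1 : (1:F) - q ≠ 0 := sub_ne_zero.mpr (Ne.symm (by simpa using hq 1 le_rfl))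
  rw [qNum, qNum, qNum, pow_add]
  field_simp
  ring
end


section
variable {F : Type*} [Field F] {q : F}

lemma qPascal (hq : ∀ j : ℕ, 1 ≤ j → q ^ j ≠ 1) {p k : ℕ} (h1 : 1 ≤ k) (h2 : k ≤ p) :
    qBinom q p k = qBinom q (p-1) k + q ^ (p-k) * qBinom q (p-1) (k-1) := by
  obtain ⟨a, rfl⟩ : ∃ a, k = a + 1 := ⟨k - 1, by omega⟩
  obtain ⟨j, rfl⟩ : ∃ j, p = a + 1 + j := ⟨p - (a+1), by omega⟩
  simp only [Nat.add_sub_cancel]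
  cases j with
  | zero =>
    simp only [Nat.add_zero, Nat.add_sub_cancel, Nat.sub_self, pow_zero, one_mul]
    rw [qBinom_self hq, qBinom_of_gt (by omega), qBinom_self hq]
    ring
  | succ b =>
    have e2 : a + 1 + (b + 1) - 1 = a + 1 + b := by omega
    have e3 : a + 1 + (b + 1) - (a + 1) = b + 1 := by omega
    rw [show a + 1 + (b+1) = (a+1) + (b+1) from rfl, e2, e3, qBinom_add]
    rw [show qBinom q (a+1+b) (a+1) = qBinom q ((a+1) + b) (a+1) from rfl, qBinom_add]
    rw [show qBinom q (a+1+b) a = qBinom q (a + (b+1)) a from by rw [show a+1+b = a+(b+1) from by omega], qBinom_add]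
    simp only [show a+1+(b+1) = a+b+1+1 from by omega, show a+1+b = a+b+1 from by omega,
      show a+(b+1) = a+b+1 from by omega]
    rw [qFact_succ (a+b+1), qFact_succ a, qFact_succ b,
      show a+b+1+1 = (b+1) + (a+1) from by omega, qNum_add hq]
    have fa : qFact q a ≠ 0 := qFact_ne hq a
    have fb : qFact q b ≠ 0 := qFact_ne hq b
    have na : qNum q (a+1) ≠ 0 := qNum_ne hq (by omega)
    have nb : qNum q (b+1) ≠ 0 := qNum_ne hq (by omega)
    set A := qNum q (a+1) with hA
    set B := qNum q (b+1) with hB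
    set Fa := qFact q a with hFa
    set Fb := qFact q b with hFb
    set G := qFact q (a+b+1) with hG
    field_simp

lemma tri_succ (k : ℕ) : (k+1) * ((k+1)-1) / 2 = k * (k-1) / 2 + k := by
  cases k with
  | zero => rfl
  | succ n =>
    have h1 : Even (n * (n+1)) := Nat.even_mul_succ_self n
    have h2 : (n+1+1) * ((n+1+1)-1) = n*(n+1) + 2*(n+1) := by simp; ring
    have h3 : (n+1) * ((n+1)-1) = n*(n+1) := by simp; ring
    rw [h2, h3]
    obtain ⟨c, hc⟩ := h1
    rw [hc]
    omega


lemma carlitz_G (hq : ∀ j : ℕ, 1 ≤ j → q ^ j ≠ 1) :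
    ∀ p r M : ℕ, p ≤ r + 1 → p + r ≤ M →
    ∑ k ∈ range (p+1), (-1:F)^k * q^(k*(k-1)/2) * qBinom q p k * qBinom q (M-k) r
      = if p ≤ r then q^(p*(M-r)) * qBinom q (M-p) (r-p) else 0 := by
  intro p
  induction p with
  | zero =>
    intro r M h1 h2
    rw [if_pos (Nat.zero_le r)]
    simp [qBinom_zero hq]
  | succ p ih =>
    intro r M h1 h2
    have hpr : p ≤ r := by omega
    rw [Finset.sum_range_succ']
    have step : ∀ k ∈ range (p+1),
        (-1:F)^(k+1) * q^((k+1)*((k+1)-1)/2) * qBinom q (p+1) (k+1) * qBinom q (M-(k+1)) r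
        = (-1:F)^(k+1) * q^((k+1)*((k+1)-1)/2) * qBinom q p (k+1) * qBinom q (M-(k+1)) r
          + (-q^p) * ((-1:F)^k * q^(k*(k-1)/2) * qBinom q p k * qBinom q ((M-1)-k) r) := by
      intro k hk
      have hk' : k ≤ p := by simpa using Nat.lt_succ_iff.mp (mem_range.mp hk)
      rw [qPascal hq (by omega : 1 ≤ k+1) (by omega : k+1 ≤ p+1)]
      have e1 : p + 1 - 1 = p := by omega
      have e2 : p + 1 - (k+1) = p - k := by omega
      have e3 : k + 1 - 1 = k := by omega
      have e4 : M - (k+1) = (M-1) - k := by omega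
      rw [e1, e2, e3, e4]
      rw [show (k+1)*k/2 = k*(k-1)/2 + k from by simpa using tri_succ k]
      have key : ((-1:F)^(k+1) * q^(k*(k-1)/2+k)) * q^(p-k)
          = (-q^p) * ((-1:F)^k * q^(k*(k-1)/2)) := by
        have e5 : q ^ (k*(k-1)/2+k) * q^(p-k) = q^(k*(k-1)/2) * q^p := by
          rw [← pow_add, ← pow_add]
          congr 1
          omega
        rw [pow_succ]
        linear_combination ((-1:F)^k * -1) * e5
      linear_combination key * (qBinom q p k * qBinom q (M-1-k) r)
    rw [Finset.sum_congr rfl step, Finset.sum_add_distrib]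
    have f0 : (-1:F)^0 * q^(0*(0-1)/2) * qBinom q (p+1) 0 * qBinom q (M-0) r
        = (-1:F)^0 * q^(0*(0-1)/2) * qBinom q p 0 * qBinom q (M-0) r := by
      rw [qBinom_zero hq, qBinom_zero hq]
    rw [add_right_comm, f0, ← Finset.sum_range_succ'
      (fun k => (-1:F)^k * q^(k*(k-1)/2) * qBinom q p k * qBinom q (M-k) r) (p+1)]
    rw [Finset.sum_range_succ, qBinom_of_gt (by omega : p < p + 1)]
    simp only [mul_zero, zero_mul, add_zero]
    rw [← Finset.mul_sum]
    rw [ih r M (by omega) (by omega), ih r (M-1) (by omega) (by omega)]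
    rw [if_pos hpr, if_pos hpr]
    obtain ⟨u, hu⟩ : ∃ u, M - r = u + 1 := ⟨M - r - 1, by omega⟩
    have e6 : M - 1 - r = u := by omega
    have e7 : M - 1 - p = M - (p+1) := by omega
    rw [e6, e7, hu]
    have e8 : (-q^p) * q ^ (p * u) = -q ^ (p * (u+1)) := by
      rw [Nat.mul_succ, pow_add]
      ring
    by_cases hc : p + 1 ≤ r
    · rw [if_pos (by omega : p + 1 ≤ r)]
      rw [qPascal hq (by omega : 1 ≤ r - p) (by omega : r - p ≤ M - p)]
      have e9 : M - p - 1 = M - (p+1) := by omega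
      have e10 : M - p - (r - p) = u + 1 := by omega
      have e11 : r - p - 1 = r - (p+1) := by omega
      rw [e9, e10, e11]
      have e12 : q ^ (p * (u+1)) * q ^ (u+1) = q ^ ((p+1) * (u+1)) := by
        rw [← pow_add]
        congr 1
        ring
      linear_combination (qBinom q (M-(p+1)) (r-p)) * e8
        + (qBinom q (M - (p+1)) (r - (p+1))) * e12
    · rw [if_neg hc]
      have e13 : r - p = 0 := by omega
      rw [e13, qBinom_zero hq, qBinom_zero hq]
      linear_combination e8

lemma carlitz_key (hq : ∀ j : ℕ, 1 ≤ j → q ^ j ≠ 1) {m N : ℕ} (hm : 1 ≤ m) (hN : 2*m ≤ N + 1) :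
    ∑ k ∈ range (m+1), (-1:F)^k * q^(k*(k-1)/2) * qBinom q m k * qBinom q (N-k) (m-1) = 0 := by
  have h := carlitz_G hq m (m-1) N (by omega) (by omega)
  rwa [if_neg (by omega)] at h

lemma term_eq (hq : ∀ j : ℕ, 1 ≤ j → q ^ j ≠ 1) {n m k : ℕ} (hm : 1 ≤ m) (hk : k ≤ m)
    (hn : 2*m ≤ n) :
    (if k = 0 then (1:F) else qNum q n / qNum q (n-k)) * qBinom q (n-k) k * qBinom q (n-2*k) (m-k)
    = (qNum q n / qNum q m) * qBinom q m k * qBinom q (n-1-k) (m-1) := by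
  obtain ⟨d, rfl⟩ : ∃ d, m = k + d := ⟨m - k, by omega⟩
  obtain ⟨c, rfl⟩ : ∃ c, n = 2*k + 2*d + c := ⟨n - 2*(k+d), by omega⟩
  have Fne := qFact_ne hq (q := q)
  cases k with
  | zero =>
    obtain ⟨e, rfl⟩ : ∃ e, d = e + 1 := ⟨d - 1, by omega⟩
    rw [if_pos rfl]
    simp only [Nat.zero_add, Nat.mul_zero, Nat.sub_zero, Nat.add_sub_cancel]
    rw [show 2*(e+1)+c-1 = e+(e+1+c) from by omega]
    rw [show 2*(e+1)+c = (e+1)+(e+1+c) from by omega]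
    rw [qBinom_zero hq, qBinom_zero hq]
    rw [show qBinom q (e+1+(e+1+c)) (e+1) = qFact q (e+1+(e+1+c)) / (qFact q (e+1) * qFact q (e+1+c)) from qBinom_add _ _]
    rw [show qBinom q (e+(e+1+c)) e = qFact q (e+(e+1+c)) / (qFact q e * qFact q (e+1+c)) from qBinom_add _ _]
    rw [show (e+1) + (e+1+c) = (e + (e+1+c)) + 1 from by omega, qFact_succ (e + (e+1+c)),
      qFact_succ e]
    have n1 : qNum q (e + (e+1+c) + 1) ≠ 0 := qNum_ne hq (by omega)
    have n2 : qNum q (e + 1) ≠ 0 := qNum_ne hq (by omega)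
    have f1 : qFact q e ≠ 0 := Fne e
    have f2 : qFact q (e+1+c) ≠ 0 := Fne _
    have f3 : qFact q (e+(e+1+c)) ≠ 0 := Fne _
    set A := qFact q e
    set B := qFact q (e+1+c)
    set G := qFact q (e+(e+1+c))
    set N1 := qNum q (e+(e+1+c)+1)
    set N2 := qNum q (e+1)
    field_simp
  | succ e =>
    rw [if_neg (by omega)]
    have r1 : 2*(e+1) + 2*d + c - (e+1) = (e+1) + (2*d+c) := by omega
    have r2 : 2*(e+1) + 2*d + c - 2*(e+1) = d + (d+c) := by omega
    have r3 : (e+1) + d - (e+1) = d := by omega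
    have r4 : 2*(e+1) + 2*d + c - 1 - (e+1) = (e+d) + (d+c) := by omega
    rw [r1, r2, r3]
    rw [show qBinom q (e+1+(2*d+c)) (e+1) = qFact q (e+1+(2*d+c)) / (qFact q (e+1) * qFact q (2*d+c)) from qBinom_add _ _]
    rw [show qBinom q (d+(d+c)) d = qFact q (d+(d+c)) / (qFact q d * qFact q (d+c)) from qBinom_add _ _]
    rw [show qBinom q (e+1+d) (e+1) = qFact q (e+1+d) / (qFact q (e+1) * qFact q d) from qBinom_add _ _]
    rw [r4]
    rw [show e+1+d-1 = e+d from by omega]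
    rw [show qBinom q (e+d+(d+c)) (e+d) = qFact q (e+d+(d+c)) / (qFact q (e+d) * qFact q (d+c)) from qBinom_add _ _]
    rw [show e+1+(2*d+c) = (e+d+(d+c)) + 1 from by omega, qFact_succ (e+d+(d+c))]
    rw [show e+1+d = (e+d)+1 from by omega, qFact_succ (e+d)]
    rw [show d+(d+c) = 2*d+c from by omega]
    have n1 : qNum q (e+d+(d+c)+1) ≠ 0 := qNum_ne hq (by omega)
    have n2 : qNum q (e+d+1) ≠ 0 := qNum_ne hq (by omega)
    have f1 : qFact q (e+1) ≠ 0 := Fne _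
    have f2 : qFact q (2*d+c) ≠ 0 := Fne _
    have f3 : qFact q d ≠ 0 := Fne _
    have f4 : qFact q (d+c) ≠ 0 := Fne _
    have f5 : qFact q (e+d) ≠ 0 := Fne _
    have f6 : qFact q (e+d+(d+c)) ≠ 0 := Fne _
    set A1 := qFact q (e+1)
    set A2 := qFact q (2*d+c)
    set A3 := qFact q d
    set A4 := qFact q (d+c)
    set A5 := qFact q (e+d)
    set A6 := qFact q (e+d+(d+c))
    set N0 := qNum q (2*(e+1)+2*d+c)
    set N1 := qNum q (e+d+(d+c)+1)
    set N2 := qNum q (e+d+1)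
    field_simp


lemma coeffSum (hq : ∀ j : ℕ, 1 ≤ j → q ^ j ≠ 1) (s : F) {n m : ℕ} (hm2 : 2*m ≤ n) :
    ∑ k ∈ range (m+1),
      (q^(k*(k-1)/2) * (if k = 0 then (1:F) else qNum q n / qNum q (n-k)) *
        qBinom q (n-k) k * (-s)^k) * (qBinom q (n-2*k) (m-k) * s^(m-k))
    = if m = 0 then 1 else 0 := by
  rcases Nat.eq_zero_or_pos m with rfl | hm
  · simp [qBinom_zero hq]
  · rw [if_neg (by omega)]
    have step : ∀ k ∈ range (m+1),
        (q^(k*(k-1)/2) * (if k = 0 then (1:F) else qNum q n / qNum q (n-k)) *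
          qBinom q (n-k) k * (-s)^k) * (qBinom q (n-2*k) (m-k) * s^(m-k))
        = (qNum q n / qNum q m * s^m) *
            ((-1:F)^k * q^(k*(k-1)/2) * qBinom q m k * qBinom q (n-1-k) (m-1)) := by
      intro k hk
      have hk' : k ≤ m := by simpa using Nat.lt_succ_iff.mp (mem_range.mp hk)
      have hs : (-s)^k * s^(m-k) = (-1:F)^k * s^m := by
        rw [neg_pow, mul_assoc, ← pow_add, show k + (m-k) = m from by omega]
      have ht := term_eq hq (by omega : 1 ≤ m) hk' hm2
      linear_combination (q^(k*(k-1)/2) * ((if k = 0 then (1:F) else qNum q n / qNum q (n-k)) *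
          qBinom q (n-k) k * qBinom q (n-2*k) (m-k))) * hs
        + (q^(k*(k-1)/2) * ((-1:F)^k * s^m)) * ht
    rw [Finset.sum_congr rfl step, ← Finset.mul_sum,
      carlitz_key hq (by omega) (by omega : 2*m ≤ (n-1)+1), mul_zero]

lemma sum_reindex {β : Type*} [AddCommMonoid β] (K : ℕ) (f : ℕ → ℕ → β) :
    ∑ k ∈ range (K+1), ∑ j ∈ range (K-k+1), f k j
    = ∑ m ∈ range (K+1), ∑ k ∈ range (m+1), f k (m-k) := by
  rw [Finset.sum_sigma', Finset.sum_sigma']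
  apply Finset.sum_nbij' (fun x => (⟨x.1 + x.2, x.1⟩ : (_ : ℕ) × ℕ))
    (fun y => (⟨y.2, y.1 - y.2⟩ : (_ : ℕ) × ℕ))
  · intro x hx
    simp only [Finset.mem_sigma, Finset.mem_range] at hx ⊢
    omega
  · intro y hy
    simp only [Finset.mem_sigma, Finset.mem_range] at hy ⊢
    omega
  · rintro ⟨a, b⟩ _
    simp
  · rintro ⟨a, b⟩ hy
    simp only [Finset.mem_sigma, Finset.mem_range] at hy
    simp only [Sigma.mk.inj_iff]
    refine ⟨by omega, heq_of_eq rfl⟩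
  · intro x hx
    simp only [Finset.mem_sigma, Finset.mem_range] at hx
    simp only [Nat.add_sub_cancel_left]

end

noncomputable def Tinv {F : Type*} [Field F] (q s : F) (b : ℕ → F) : ℕ → F
  | n => b n - ∑ k ∈ (Finset.Icc 1 (n/2)).attach,
      qBinom q n k.1 * s ^ k.1 * Tinv q s b (n - 2 * k.1)
termination_by n => n
decreasing_by
  have := Finset.mem_Icc.mp k.2
  omega

section
variable {F : Type*} [Field F] {q : F}

lemma Tinv_spec (hq : ∀ j : ℕ, 1 ≤ j → q ^ j ≠ 1) (s : F) (b : ℕ → F) (n : ℕ) :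
    b n = ∑ k ∈ range (n/2 + 1), qBinom q n k * s ^ k * Tinv q s b (n - 2 * k) := by
  have hr : range (n/2 + 1) = insert 0 (Finset.Icc 1 (n/2)) := by
    ext x
    simp only [mem_range, mem_insert, mem_Icc]
    omega
  rw [hr, Finset.sum_insert (by simp)]
  rw [qBinom_zero hq, Finset.sum_congr rfl (fun k _ => rfl)]
  conv_lhs => rw [show b n = b n from rfl]
  rw [Tinv]
  rw [← Finset.sum_attach (Finset.Icc 1 (n/2))
    (fun k => qBinom q n k * s ^ k * Tinv q s b (n - 2 * k))]
  simp only [pow_zero, one_mul, mul_one, Nat.mul_zero, Nat.sub_zero]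
  ring

lemma carlitz_forward (hq : ∀ j : ℕ, 1 ≤ j → q ^ j ≠ 1) (s : F) (a b : ℕ → F)
    (hb : ∀ n : ℕ, b n = ∑ k ∈ Finset.range (n / 2 + 1),
        qBinom q n k * s ^ k * a (n - 2 * k)) :
    ∀ n : ℕ, a n = ∑ k ∈ Finset.range (n / 2 + 1),
        q ^ (k * (k - 1) / 2) * (if k = 0 then 1 else qNum q n / qNum q (n - k)) *
          qBinom q (n - k) k * (-s) ^ k * b (n - 2 * k) := by
  intro n
  have step1 : ∀ k ∈ range (n/2 + 1),
      q ^ (k * (k - 1) / 2) * (if k = 0 then 1 else qNum q n / qNum q (n - k)) *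
          qBinom q (n - k) k * (-s) ^ k * b (n - 2 * k)
      = ∑ j ∈ range (n/2 - k + 1),
          (q ^ (k * (k - 1) / 2) * (if k = 0 then 1 else qNum q n / qNum q (n - k)) *
            qBinom q (n - k) k * (-s) ^ k) *
          (qBinom q (n - 2*k) j * s ^ j * a (n - 2*k - 2*j)) := by
    intro k hk
    have hk' : k ≤ n/2 := by simpa using Nat.lt_succ_iff.mp (mem_range.mp hk)
    rw [hb (n - 2*k), Finset.mul_sum]
    rw [show (n - 2*k)/2 = n/2 - k from by omega]
  rw [Finset.sum_congr rfl step1, sum_reindex]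
  have step2 : ∀ m ∈ range (n/2 + 1),
      (∑ k ∈ range (m+1),
        (q ^ (k * (k - 1) / 2) * (if k = 0 then 1 else qNum q n / qNum q (n - k)) *
          qBinom q (n - k) k * (-s) ^ k) *
        (qBinom q (n - 2*k) (m-k) * s ^ (m-k) * a (n - 2*k - 2*(m-k))))
      = (if m = 0 then 1 else 0) * a (n - 2*m) := by
    intro m hm
    have hm' : m ≤ n/2 := by simpa using Nat.lt_succ_iff.mp (mem_range.mp hm)
    have step3 : ∀ k ∈ range (m+1),
        (q ^ (k * (k - 1) / 2) * (if k = 0 then 1 else qNum q n / qNum q (n - k)) *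
          qBinom q (n - k) k * (-s) ^ k) *
        (qBinom q (n - 2*k) (m-k) * s ^ (m-k) * a (n - 2*k - 2*(m-k)))
        = ((q ^ (k * (k - 1) / 2) * (if k = 0 then 1 else qNum q n / qNum q (n - k)) *
          qBinom q (n - k) k * (-s) ^ k) *
          (qBinom q (n - 2*k) (m-k) * s ^ (m-k))) * a (n - 2*m) := by
      intro k hk
      have hk' : k ≤ m := by simpa using Nat.lt_succ_iff.mp (mem_range.mp hk)
      rw [show n - 2*k - 2*(m-k) = n - 2*m from by omega]
      ring
    rw [Finset.sum_congr rfl step3, ← Finset.sum_mul, coeffSum hq s (by omega : 2*m ≤ n)]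
  rw [Finset.sum_congr rfl step2]
  simp only [ite_mul, one_mul, zero_mul]
  rw [Finset.sum_ite_eq' (range (n/2+1)) 0 (fun m => a (n - 2*m))]
  simp

end

/-- Carlitz inversion: `b(n) = Σ_{k≤n/2} [n choose k]_q s^k a(n-2k)` for all `n`
iff `a(n) = Σ_{k≤n/2} q^{k(k-1)/2} ([n]_q/[n-k]_q) [n-k choose k]_q (-s)^k b(n-2k)`
for all `n`.  (The ratio `[n]_q/[n-k]_q` equals `1` when `k = 0`.) -/
theorem carlitz_inversion {F : Type*} [Field F] (q : F)
    (hq : ∀ j : ℕ, 1 ≤ j → q ^ j ≠ 1) (s : F) (a b : ℕ → F) :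
    (∀ n : ℕ, b n = ∑ k ∈ Finset.range (n / 2 + 1),
        qBinom q n k * s ^ k * a (n - 2 * k)) ↔
    (∀ n : ℕ, a n = ∑ k ∈ Finset.range (n / 2 + 1),
        q ^ (k * (k - 1) / 2) * (if k = 0 then 1 else qNum q n / qNum q (n - k)) *
          qBinom q (n - k) k * (-s) ^ k * b (n - 2 * k)) := by
  constructor
  · exact carlitz_forward hq s a b
  · intro ha
    have hb' := Tinv_spec hq s b
    have ha' := carlitz_forward hq s (Tinv q s b) b hb'
    have haa : ∀ n, a n = Tinv q s b n := fun n => by rw [ha n, ha' n]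
    intro n
    rw [hb' n]
    exact Finset.sum_congr rfl fun k _ => by rw [haa]
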